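/- Let ξ : ℝ² → ℝ be given by an absolutely convergent power series ξ(x₁,x₂) = Σ_{i,j ≥ 0} c_{ij} x₁^i x₂^j on ℝ² with all coefficients c_{ij} ≥ 0 and with c_{00} = 0 and c_{10} = c_{01} = 0 (so that ξ(0) = 0 and ∇ξ(0) = 0), and assume that ξ is convex on ℝ_+². Then for all real numbers a ≤ a' and b ≤ b', one has ξ*(a,b) + ξ*(a',b') ≤ ξ*(a',b) + ξ*(a,b'). -/

import Mathlib

open MeasureTheory

/-- The nonnegative orthant `ℝ_+^D` in `ℝ^D`. -/
def orthant (D : ℕ) : Set (EuclideanSpace ℝ (Fin D)) := {x | ∀ i, 0 ≤ x i}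

/-- The monotone conjugate `ξ*(y) = sup_{x ∈ ℝ_+^D} (x·y − ξ(x))`, valued in `ℝ ∪ {+∞}`
(formalized as `EReal`). -/
noncomputable def monotoneConj (D : ℕ) (ξ : EuclideanSpace ℝ (Fin D) → ℝ)
    (y : EuclideanSpace ℝ (Fin D)) : EReal :=
  ⨆ x : orthant D, (((inner ℝ x.1 y : ℝ) - ξ x.1 : ℝ) : EReal)

/-- The vector `(a, b) ∈ ℝ²`. -/
def vec2 (a b : ℝ) : EuclideanSpace ℝ (Fin 2) := WithLp.toLp 2 ![a, b]

/-- if `ξ : ℝ² → ℝ` is given by an absolutely convergent power series with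
nonnegative coefficients, vanishing constant and linear terms, and `ξ` is convex on `ℝ_+²`,
then `ξ*(a,b) + ξ*(a',b') ≤ ξ*(a',b) + ξ*(a,b')` whenever `a ≤ a'` and `b ≤ b'`. -/
lemma key_pow (s s' t t' : ℝ) (hs : 0 ≤ s) (hs' : 0 ≤ s') (ht : 0 ≤ t) (ht' : 0 ≤ t') (i j : ℕ) :
    max s s' ^ i * min t t' ^ j + min s s' ^ i * max t t' ^ j ≤ s ^ i * t ^ j + s' ^ i * t' ^ j := by
  rcases le_total s s' with h | h <;> rcases le_total t t' with h2 | h2 <;>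
    simp only [max_eq_left h, max_eq_right h, min_eq_left h2, min_eq_right h2,
      max_eq_left h2, max_eq_right h2, min_eq_left h, min_eq_right h]
  · nlinarith [pow_le_pow_left₀ hs h i, pow_le_pow_left₀ ht h2 j]
  · linarith
  · linarith
  · nlinarith [pow_le_pow_left₀ hs' h i, pow_le_pow_left₀ ht' h2 j]

theorem monotoneConj_submodular (c : ℕ → ℕ → ℝ) (hc : ∀ i j, 0 ≤ c i j)
    (hc00 : c 0 0 = 0) (hc10 : c 1 0 = 0) (hc01 : c 0 1 = 0)
    (ξ : EuclideanSpace ℝ (Fin 2) → ℝ)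
    (habs : ∀ x : EuclideanSpace ℝ (Fin 2),
      Summable (fun p : ℕ × ℕ => |c p.1 p.2 * x 0 ^ p.1 * x 1 ^ p.2|))
    (hξ : ∀ x : EuclideanSpace ℝ (Fin 2),
      ξ x = ∑' p : ℕ × ℕ, c p.1 p.2 * x 0 ^ p.1 * x 1 ^ p.2)
    (hconv : ConvexOn ℝ (orthant 2) ξ)
    (a a' b b' : ℝ) (ha : a ≤ a') (hb : b ≤ b') :
    monotoneConj 2 ξ (vec2 a b) + monotoneConj 2 ξ (vec2 a' b') ≤
      monotoneConj 2 ξ (vec2 a' b) + monotoneConj 2 ξ (vec2 a b') := by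
  have hsum : ∀ x : EuclideanSpace ℝ (Fin 2),
      Summable (fun p : ℕ × ℕ => c p.1 p.2 * x 0 ^ p.1 * x 1 ^ p.2) :=
    fun x => (habs x).of_abs
  have hinner : ∀ (x : EuclideanSpace ℝ (Fin 2)) (p q : ℝ),
      (inner ℝ x (vec2 p q) : ℝ) = x 0 * p + x 1 * q := by
    intro x p q
    simp [PiLp.inner_apply, Fin.sum_univ_two, vec2, RCLike.inner_apply]
    ring
  apply EReal.add_le_of_forall_lt
  intro p hp q hq
  rw [monotoneConj, lt_iSup_iff] at hp hq
  obtain ⟨⟨x, hx⟩, hpx⟩ := hp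
  obtain ⟨⟨y, hy⟩, hqy⟩ := hq
  -- define the swapped points
  set u : EuclideanSpace ℝ (Fin 2) := vec2 (max (x 0) (y 0)) (min (x 1) (y 1)) with hu_def
  set v : EuclideanSpace ℝ (Fin 2) := vec2 (min (x 0) (y 0)) (max (x 1) (y 1)) with hv_def
  have hu0 : u 0 = max (x 0) (y 0) := by simp [hu_def, vec2]
  have hu1 : u 1 = min (x 1) (y 1) := by simp [hu_def, vec2]
  have hv0 : v 0 = min (x 0) (y 0) := by simp [hv_def, vec2]
  have hv1 : v 1 = max (x 1) (y 1) := by simp [hv_def, vec2]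
  have hx0 := hx 0; have hx1 := hx 1; have hy0 := hy 0; have hy1 := hy 1
  have hu : u ∈ orthant 2 := by
    intro i
    fin_cases i
    · show (0:ℝ) ≤ u 0; rw [hu0]; exact le_max_of_le_left hx0
    · show (0:ℝ) ≤ u 1; rw [hu1]; exact le_min hx1 hy1
  have hv : v ∈ orthant 2 := by
    intro i
    fin_cases i
    · show (0:ℝ) ≤ v 0; rw [hv0]; exact le_min hx0 hy0
    · show (0:ℝ) ≤ v 1; rw [hv1]; exact le_max_of_le_left hx1
  -- ξ inequality
  have hxi : ξ u + ξ v ≤ ξ x + ξ y := by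
    rw [hξ u, hξ v, hξ x, hξ y, ← Summable.tsum_add (hsum u) (hsum v), ← Summable.tsum_add (hsum x) (hsum y)]
    refine Summable.tsum_le_tsum (fun ij => ?_) ((hsum u).add (hsum v)) ((hsum x).add (hsum y))
    have := key_pow (x 0) (y 0) (x 1) (y 1) hx0 hy0 hx1 hy1 ij.1 ij.2
    have hcn := hc ij.1 ij.2
    rw [hu0, hu1, hv0, hv1]
    nlinarith [this, hcn]
  -- inner product inequality
  have hin : (inner ℝ x (vec2 a b) : ℝ) + (inner ℝ y (vec2 a' b') : ℝ) ≤
      (inner ℝ u (vec2 a' b) : ℝ) + (inner ℝ v (vec2 a b') : ℝ) := by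
    rw [hinner, hinner, hinner, hinner, hu0, hu1, hv0, hv1]
    rcases le_total (x 0) (y 0) with h | h <;> rcases le_total (x 1) (y 1) with h2 | h2 <;>
      simp only [max_eq_left h, max_eq_right h, min_eq_left h2, min_eq_right h2,
        max_eq_left h2, max_eq_right h2, min_eq_left h, min_eq_right h] <;> nlinarith
  have hreal : ((inner ℝ x (vec2 a b) : ℝ) - ξ x) + ((inner ℝ y (vec2 a' b') : ℝ) - ξ y) ≤
      ((inner ℝ u (vec2 a' b) : ℝ) - ξ u) + ((inner ℝ v (vec2 a b') : ℝ) - ξ v) := by linarith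
  calc p + q ≤ (((inner ℝ x (vec2 a b) : ℝ) - ξ x : ℝ) : EReal) +
        (((inner ℝ y (vec2 a' b') : ℝ) - ξ y : ℝ) : EReal) := add_le_add hpx.le hqy.le
    _ = ((((inner ℝ x (vec2 a b) : ℝ) - ξ x) + ((inner ℝ y (vec2 a' b') : ℝ) - ξ y) : ℝ) : EReal) := by
        rw [EReal.coe_add]
    _ ≤ ((((inner ℝ u (vec2 a' b) : ℝ) - ξ u) + ((inner ℝ v (vec2 a b') : ℝ) - ξ v) : ℝ) : EReal) :=
        EReal.coe_le_coe_iff.2 hreal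
    _ = (((inner ℝ u (vec2 a' b) : ℝ) - ξ u : ℝ) : EReal) +
        (((inner ℝ v (vec2 a b') : ℝ) - ξ v : ℝ) : EReal) := by rw [EReal.coe_add]
    _ ≤ monotoneConj 2 ξ (vec2 a' b) + monotoneConj 2 ξ (vec2 a b') :=
        add_le_add (le_iSup (fun z : orthant 2 => (((inner ℝ z.1 (vec2 a' b) : ℝ) - ξ z.1 : ℝ) : EReal)) ⟨u, hu⟩)
          (le_iSup (fun z : orthant 2 => (((inner ℝ z.1 (vec2 a b') : ℝ) - ξ z.1 : ℝ) : EReal)) ⟨v, hv⟩)
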